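/- Let R be a commutative ring, s an odd positive integer, and b_0,...,b_{s-1} ∈ R with b_i = b_{s-i} for all 1 ≤ i ≤ s-1. Then there exists v ∈ R such that the determinant of the circulant matrix C(b_0,...,b_{s-1}) equals (∑_{i=0}^{s-1} b_i) · v². -/

import Mathlib

section
open Fin.CommRing Fin.NatCast

private lemma sum_ite_val {m : ℕ} {M : Type*} [AddCommMonoid M] (f : Fin m → M) (c : ℕ) :
    ∑ t : Fin m, (if (t:ℕ) = c then f t else 0) = if hc : c < m then f ⟨c, hc⟩ else 0 := by
  split_ifs with hc
  · have h : ∀ t : Fin m, ((t:ℕ) = c) = (t = ⟨c, hc⟩) := fun t => by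
      apply propext; exact ⟨fun h => Fin.ext h, fun h => by simp [h]⟩
    simp_rw [h]; simp
  · apply Finset.sum_eq_zero; intro t _
    rw [if_neg]; intro h; exact hc (h ▸ t.isLt)

private lemma rowG {m : ℕ} {R : Type*} [CommRing R] (f : Fin m → R) (k : Fin m) :
    ∑ t : Fin m, ((if (t:ℕ) = (k:ℕ) then (1:R) else 0) -
        (if (t:ℕ) = (k:ℕ)+1 then 1 else 0)) * f t
      = f k - (if h : (k:ℕ)+1 < m then f ⟨(k:ℕ)+1, h⟩ else 0) := by
  simp only [sub_mul, one_mul, zero_mul, ite_mul, Finset.sum_sub_distrib]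
  rw [sum_ite_val f ((k:ℕ)), sum_ite_val f ((k:ℕ)+1), dif_pos k.isLt, Fin.eta]

private lemma colG {m : ℕ} {R : Type*} [CommRing R] (f : Fin m → R) (l : Fin m) :
    ∑ t : Fin m, f t * ((if (l:ℕ) = (t:ℕ) then (1:R) else 0) -
        (if (l:ℕ) = (t:ℕ)+1 then 1 else 0))
      = f l - (if (l:ℕ) = 0 then 0
          else f ⟨(l:ℕ)-1, by have := l.isLt; omega⟩) := by
  simp only [mul_sub, mul_ite, mul_one, mul_zero, Finset.sum_sub_distrib]
  congr 1
  · have h : ∀ t : Fin m, (if (l:ℕ) = (t:ℕ) then f t else 0)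
        = (if (t:ℕ) = (l:ℕ) then f t else 0) := fun t => by
      rcases eq_or_ne ((t:ℕ)) ((l:ℕ)) with h|h
      · simp [h]
      · rw [if_neg (fun hh => h hh.symm), if_neg h]
    rw [Finset.sum_congr rfl (fun t _ => h t), sum_ite_val f ((l:ℕ)), dif_pos l.isLt, Fin.eta]
  · by_cases hl : (l:ℕ) = 0
    · rw [if_pos hl]
      apply Finset.sum_eq_zero; intro t _
      rw [if_neg]; omega
    · rw [if_neg hl]
      have h : ∀ t : Fin m, (if (l:ℕ) = (t:ℕ)+1 then f t else 0)
          = (if (t:ℕ) = (l:ℕ)-1 then f t else 0) := fun t => by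
        by_cases h : (t:ℕ) = (l:ℕ)-1
        · rw [if_pos h, if_pos (by omega)]
        · rw [if_neg (by omega), if_neg h]
      rw [Finset.sum_congr rfl (fun t _ => h t), sum_ite_val f ((l:ℕ)-1),
        dif_pos (by have := l.isLt; omega : (l:ℕ)-1 < m)]

private lemma detblock {R : Type*} [CommRing R] {α : Type*} [DecidableEq α] [Fintype α]
    (X Y : Matrix α α R) :
    (Matrix.fromBlocks X Y Y X).det = (X + Y).det * (X - Y).det := by
  have key : (Matrix.fromBlocks 1 0 (-1) 1 : Matrix (α ⊕ α) (α ⊕ α) R) *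
      (Matrix.fromBlocks X Y Y X * Matrix.fromBlocks 1 0 1 1) =
      Matrix.fromBlocks (X + Y) Y 0 (X - Y) := by
    rw [Matrix.fromBlocks_multiply, Matrix.fromBlocks_multiply]
    congr 1 <;> simp [sub_eq_add_neg] <;> abel
  have h1 : (Matrix.fromBlocks 1 0 (-1) 1 : Matrix (α ⊕ α) (α ⊕ α) R).det = 1 := by
    rw [Matrix.det_fromBlocks_zero₁₂]; simp
  have h2 : (Matrix.fromBlocks 1 0 1 1 : Matrix (α ⊕ α) (α ⊕ α) R).det = 1 := by
    rw [Matrix.det_fromBlocks_zero₁₂]; simp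
  have h3 := congrArg Matrix.det key
  rw [Matrix.det_mul, Matrix.det_mul, h1, h2, one_mul, mul_one,
    Matrix.det_fromBlocks_zero₂₁] at h3
  exact h3

private def gg {m : ℕ} (k : Fin m) : Fin (2*m+1) := (((k:ℕ) + 1 : ℕ) : Fin (2*m+1))

private def Ma {m : ℕ} {R : Type*} [CommRing R] (b : Fin (2*m+1) → R) :
    Matrix (Fin m) (Fin m) R :=
  Matrix.of fun k l => b (gg l - gg k) - b (gg l)

private def Mb {m : ℕ} {R : Type*} [CommRing R] (b : Fin (2*m+1) → R) :
    Matrix (Fin m) (Fin m) R :=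
  Matrix.of fun k l => b (gg l + gg k) - b (gg l)

private def Gmat (m : ℕ) (R : Type*) [CommRing R] : Matrix (Fin m) (Fin m) R :=
  Matrix.of fun k l => (if (l:ℕ) = (k:ℕ) then 1 else 0) - (if (l:ℕ) = (k:ℕ)+1 then 1 else 0)

private lemma detGmat (m : ℕ) (R : Type*) [CommRing R] : (Gmat m R).det = 1 := by
  have htri : (Gmat m R).BlockTriangular id := by
    intro i j hij
    have h3 : (j:ℕ) < (i:ℕ) := hij
    have h1 : (j:ℕ) ≠ (i:ℕ) := by omega
    have h2 : (j:ℕ) ≠ (i:ℕ)+1 := by omega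
    simp [Gmat, h1, h2]
  rw [Matrix.det_of_upperTriangular htri]
  apply Finset.prod_eq_one
  intro i _
  simp [Gmat]

private def esplit (m : ℕ) : (Fin m ⊕ Fin m) ≃ Fin (2*m) :=
  (Equiv.sumCongr (Equiv.refl (Fin m)) (Fin.revPerm)).trans
    (finSumFinEquiv.trans (finCongr (two_mul m).symm))

private lemma esplit_inl (m : ℕ) (k : Fin m) :
    (Fin.succ (esplit m (Sum.inl k)) : Fin (2*m+1)) = gg k := by
  apply Fin.ext
  simp only [esplit, gg, Equiv.trans_apply, Equiv.sumCongr_apply, Equiv.coe_refl, Sum.map_inl,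
    id_eq, finSumFinEquiv_apply_left, finCongr_apply, Fin.val_succ, Fin.coe_cast,
    Fin.coe_castAdd, Fin.val_natCast]
  rw [Nat.mod_eq_of_lt (by have := k.isLt; omega)]

private lemma esplit_inr (m : ℕ) (k : Fin m) :
    (Fin.succ (esplit m (Sum.inr k)) : Fin (2*m+1)) = -(gg k) := by
  have hk := k.isLt
  have h0 : ((2*m+1 : ℕ) : Fin (2*m+1)) = 0 := by
    exact_mod_cast CharP.cast_eq_zero (Fin (2*m+1)) (2*m+1)
  have key : -(gg k) = ((2*m - (k:ℕ) : ℕ) : Fin (2*m+1)) := by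
    rw [eq_comm, eq_neg_iff_add_eq_zero]
    unfold gg
    push_cast [Nat.cast_sub (by omega : (k:ℕ) ≤ 2*m)] at h0 ⊢
    linear_combination h0
  rw [key]
  apply Fin.ext
  simp [esplit, Fin.val_natCast, Fin.val_rev]
  rw [Nat.mod_eq_of_lt (by omega)]
  omega

private lemma gg_ne_zero {m : ℕ} (k : Fin m) : (gg k : Fin (2*m+1)) ≠ 0 := by
  intro h
  have := congrArg Fin.val h
  simp only [gg, Fin.val_natCast, Fin.val_zero] at this
  rw [Nat.mod_eq_of_lt (by have := k.isLt; omega)] at this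
  omega

private lemma inter {m : ℕ} {R : Type*} [CommRing R] (b : Fin (2*m+1) → R)
    (hb : ∀ i, b (-i) = b i) :
    Gmat m R * ((Ma b + Mb b).submatrix Fin.rev Fin.rev)
      = (Ma b - Mb b) * Gmat m R := by
  ext k l
  have hk := k.isLt; have hl := l.isLt
  have h0 : ((2*m+1 : ℕ) : Fin (2*m+1)) = 0 := by
    exact_mod_cast CharP.cast_eq_zero (Fin (2*m+1)) (2*m+1)
  rw [Matrix.mul_apply, Matrix.mul_apply]
  simp only [Gmat, Matrix.of_apply]
  rw [rowG (fun t => ((Ma b + Mb b).submatrix Fin.rev Fin.rev) t l) k,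
    colG (fun t => (Ma b - Mb b) k t) l]
  simp only [Matrix.submatrix_apply, Matrix.add_apply, Matrix.sub_apply, Ma, Mb,
    Matrix.of_apply, gg, Fin.val_rev]
  by_cases hk1 : (k:ℕ)+1 < m <;> by_cases hl0 : (l:ℕ) = 0 <;>
    simp only [hk1, hl0, dif_pos, dif_neg, if_pos, if_neg, not_false_iff, dite_true, dite_false,
      ite_true, ite_false]
  -- case 1 : k+1 < m, l = 0
  · rw [show m - (0 + 1) + 1 = m from by omega,
      show m - (↑k + 1) + 1 = m - (k:ℕ) from by omega,
      show m - (↑k + 1 + 1) + 1 = m - ((k:ℕ)+1) from by omega]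
    have E1 : ((m:ℕ) : Fin (2*m+1)) - ((m - (k:ℕ) :ℕ) : Fin (2*m+1))
        = -(((0+1 :ℕ) : Fin (2*m+1)) - (((k:ℕ)+1 :ℕ) : Fin (2*m+1))) := by
      push_cast [Nat.cast_sub (by omega : (k:ℕ) ≤ m)]
      ring
    have E2 : ((m:ℕ) : Fin (2*m+1)) + ((m - (k:ℕ) :ℕ) : Fin (2*m+1))
        = -(((m:ℕ) : Fin (2*m+1)) - ((m - ((k:ℕ)+1) :ℕ) : Fin (2*m+1))) := by
      push_cast [Nat.cast_sub (by omega : (k:ℕ) ≤ m), Nat.cast_sub (by omega : (k:ℕ)+1 ≤ m)] at h0 ⊢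
      linear_combination h0
    have E4 : ((m:ℕ) : Fin (2*m+1)) + ((m - ((k:ℕ)+1) :ℕ) : Fin (2*m+1))
        = -(((0+1 :ℕ) : Fin (2*m+1)) + (((k:ℕ)+1 :ℕ) : Fin (2*m+1))) := by
      push_cast [Nat.cast_sub (by omega : (k:ℕ)+1 ≤ m)] at h0 ⊢
      linear_combination h0
    rw [E1, E2, E4]
    simp only [hb]
    ring
  -- case 2 : k+1 < m, l ≠ 0  (generic)
  · rw [show m - (↑l + 1) + 1 = m - (l:ℕ) from by omega,
      show m - (↑k + 1) + 1 = m - (k:ℕ) from by omega,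
      show m - (↑k + 1 + 1) + 1 = m - ((k:ℕ)+1) from by omega,
      show (l:ℕ) - 1 + 1 = (l:ℕ) from by omega]
    have E1 : ((m - (l:ℕ) :ℕ) : Fin (2*m+1)) - ((m - (k:ℕ) :ℕ) : Fin (2*m+1))
        = -((((l:ℕ)+1 :ℕ) : Fin (2*m+1)) - (((k:ℕ)+1 :ℕ) : Fin (2*m+1))) := by
      push_cast [Nat.cast_sub (by omega : (k:ℕ) ≤ m), Nat.cast_sub (by omega : (l:ℕ) ≤ m)]
      ring
    have E2 : ((m - (l:ℕ) :ℕ) : Fin (2*m+1)) + ((m - (k:ℕ) :ℕ) : Fin (2*m+1))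
        = -((((l:ℕ) :ℕ) : Fin (2*m+1)) + (((k:ℕ)+1 :ℕ) : Fin (2*m+1))) := by
      push_cast [Nat.cast_sub (by omega : (k:ℕ) ≤ m), Nat.cast_sub (by omega : (l:ℕ) ≤ m)] at h0 ⊢
      linear_combination h0
    have E3 : ((m - (l:ℕ) :ℕ) : Fin (2*m+1)) - ((m - ((k:ℕ)+1) :ℕ) : Fin (2*m+1))
        = -((((l:ℕ) :ℕ) : Fin (2*m+1)) - (((k:ℕ)+1 :ℕ) : Fin (2*m+1))) := by
      push_cast [Nat.cast_sub (by omega : (k:ℕ)+1 ≤ m), Nat.cast_sub (by omega : (l:ℕ) ≤ m)]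
      ring
    have E4 : ((m - (l:ℕ) :ℕ) : Fin (2*m+1)) + ((m - ((k:ℕ)+1) :ℕ) : Fin (2*m+1))
        = -((((l:ℕ)+1 :ℕ) : Fin (2*m+1)) + (((k:ℕ)+1 :ℕ) : Fin (2*m+1))) := by
      push_cast [Nat.cast_sub (by omega : (k:ℕ)+1 ≤ m), Nat.cast_sub (by omega : (l:ℕ) ≤ m)] at h0 ⊢
      linear_combination h0
    rw [E1, E2, E3, E4]
    simp only [hb]
    ring
  -- case 3 : k+1 = m, l = 0
  · rw [show m - (0 + 1) + 1 = m from by omega,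
      show m - (↑k + 1) + 1 = m - (k:ℕ) from by omega]
    have E1 : ((m:ℕ) : Fin (2*m+1)) - ((m - (k:ℕ) :ℕ) : Fin (2*m+1))
        = -(((0+1 :ℕ) : Fin (2*m+1)) - (((k:ℕ)+1 :ℕ) : Fin (2*m+1))) := by
      push_cast [Nat.cast_sub (by omega : (k:ℕ) ≤ m)]
      ring
    have E2 : ((m:ℕ) : Fin (2*m+1)) + ((m - (k:ℕ) :ℕ) : Fin (2*m+1))
        = -((m:ℕ) : Fin (2*m+1)) := by
      push_cast [Nat.cast_sub (by omega : (k:ℕ) ≤ m)] at h0 ⊢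
      have hkm' : ((k:ℕ) : Fin (2*m+1)) = ((m:ℕ) : Fin (2*m+1)) - 1 := by
        have h' : (k:ℕ) = m - 1 := by omega
        rw [h']
        push_cast [Nat.cast_sub (by omega : 1 ≤ m)]
        ring
      rw [hkm']
      linear_combination h0
    have E5 : ((0+1 :ℕ) : Fin (2*m+1)) + (((k:ℕ)+1 :ℕ) : Fin (2*m+1))
        = -((m:ℕ) : Fin (2*m+1)) := by
      push_cast at h0 ⊢
      have h'' : ((k:ℕ) : Fin (2*m+1)) = ((m:ℕ) : Fin (2*m+1)) - 1 := by
        have h' : (k:ℕ) = m - 1 := by omega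
        rw [h']
        push_cast [Nat.cast_sub (by omega : 1 ≤ m)]
        ring
      rw [h'']
      linear_combination h0
    rw [E1, E2, E5]
    simp only [hb]
    ring
  -- case 4 : k+1 = m, l ≠ 0
  · rw [show m - (↑l + 1) + 1 = m - (l:ℕ) from by omega,
      show m - (↑k + 1) + 1 = m - (k:ℕ) from by omega,
      show (l:ℕ) - 1 + 1 = (l:ℕ) from by omega]
    have E1 : ((m - (l:ℕ) :ℕ) : Fin (2*m+1)) - ((m - (k:ℕ) :ℕ) : Fin (2*m+1))
        = -((((l:ℕ)+1 :ℕ) : Fin (2*m+1)) - (((k:ℕ)+1 :ℕ) : Fin (2*m+1))) := by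
      push_cast [Nat.cast_sub (by omega : (k:ℕ) ≤ m), Nat.cast_sub (by omega : (l:ℕ) ≤ m)]
      ring
    have E2 : ((m - (l:ℕ) :ℕ) : Fin (2*m+1)) + ((m - (k:ℕ) :ℕ) : Fin (2*m+1))
        = -((((l:ℕ) :ℕ) : Fin (2*m+1)) + (((k:ℕ)+1 :ℕ) : Fin (2*m+1))) := by
      push_cast [Nat.cast_sub (by omega : (k:ℕ) ≤ m), Nat.cast_sub (by omega : (l:ℕ) ≤ m)] at h0 ⊢
      linear_combination h0
    have E5 : (((l:ℕ)+1 :ℕ) : Fin (2*m+1)) + (((k:ℕ)+1 :ℕ) : Fin (2*m+1))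
        = -((m - (l:ℕ) :ℕ) : Fin (2*m+1)) := by
      have h' : (k:ℕ) = m - 1 := by omega
      rw [h']
      push_cast [Nat.cast_sub (by omega : (l:ℕ) ≤ m), Nat.cast_sub (by omega : 1 ≤ m)] at h0 ⊢
      linear_combination h0
    have E6 : (((l:ℕ) :ℕ) : Fin (2*m+1)) - (((k:ℕ)+1 :ℕ) : Fin (2*m+1))
        = -((m - (l:ℕ) :ℕ) : Fin (2*m+1)) := by
      have h' : (k:ℕ) = m - 1 := by omega
      rw [h']
      push_cast [Nat.cast_sub (by omega : (l:ℕ) ≤ m), Nat.cast_sub (by omega : 1 ≤ m)]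
      ring
    rw [E1, E2, E5, E6]
    simp only [hb]
    ring

end

theorem stmt_6 (R : Type*) [CommRing R] (s : ℕ) (hs : 0 < s) (hso : Odd s)
    (b : Fin s → R) (hb : ∀ i : Fin s, b (-i) = b i) :
    ∃ v : R,
      Matrix.det (Matrix.of fun i j : Fin s => b (j - i))
        = (∑ i : Fin s, b i) * v ^ 2 := by
  obtain ⟨m, rfl⟩ := hso
  refine ⟨(Ma b - Mb b).det, ?_⟩
  set M : Matrix (Fin (2*m+1)) (Fin (2*m+1)) R := Matrix.of fun i j => b (j - i) with hM
  set M₃ : Matrix (Fin (2*m+1)) (Fin (2*m+1)) R :=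
    Matrix.of fun i j => if j = 0 then 1 else b (j - i) - b j with hM3
  have hsum : ∀ i : Fin (2*m+1), ∑ j, b (j - i) = ∑ j, b j := fun i =>
    Fintype.sum_equiv (Equiv.subRight i) _ _ (fun j => rfl)
  set M₂ : Matrix (Fin (2*m+1)) (Fin (2*m+1)) R := M.updateCol 0 (fun _ => 1) with hM2
  have hM20 : ∀ i, M₂ i 0 = 1 := by intro i; simp [hM2, Matrix.updateCol_apply]
  -- step 1 : column sum
  have h1 : M.det = (∑ i, b i) * M₂.det := by
    have efun : (fun k => ∑ i, (1:R) • M k i) = (fun _ : Fin (2*m+1) => (∑ j, b j) • (1:R)) := by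
      funext k; simpa [hM] using hsum k
    calc M.det = (1:R) • M.det := (one_smul _ _).symm
      _ = (M.updateCol 0 (fun k => ∑ i, (1:R) • M k i)).det :=
          (Matrix.det_updateCol_sum M 0 (fun _ => (1:R))).symm
      _ = (M.updateCol 0 ((∑ j, b j) • (fun _ => (1:R)))).det := by rw [efun]; rfl
      _ = (∑ i, b i) * M₂.det := by
          rw [Matrix.det_updateCol_smul]
  -- step 2 : elimination matrix
  set E : Matrix (Fin (2*m+1)) (Fin (2*m+1)) R :=
    Matrix.of fun k j => (if k = j then (1:R) else 0) +
      (if k = 0 then (if j = 0 then 0 else -b j) else 0) with hE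
  have hME : M₂ * E = M₃ := by
    ext i j
    rw [Matrix.mul_apply]
    have hent : ∀ k, M₂ i k * E k j = (if k = j then M₂ i j else 0) +
        (if k = 0 then (if j = 0 then 0 else -b j) else 0) := by
      intro k
      rcases eq_or_ne k j with rfl|h
      · rcases eq_or_ne k 0 with rfl|h0
        · simp [hE, hM20]
        · simp [hE, h0]
      · rcases eq_or_ne k 0 with rfl|h0
        · have hj : j ≠ 0 := fun hh => h hh.symm
          simp [hE, h, hj, hM20]
        · simp [hE, h, h0]
    rw [Finset.sum_congr rfl (fun k _ => hent k), Finset.sum_add_distrib,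
      Finset.sum_ite_eq' Finset.univ j (fun _ => M₂ i j),
      Finset.sum_ite_eq' Finset.univ (0 : Fin (2*m+1))
        (fun _ => (if j = 0 then 0 else -b j))]
    rcases eq_or_ne j 0 with rfl|hj
    · simp [hM3, hM20]
    · simp [hM3, hj, hM2, Matrix.updateCol_apply, hM, sub_eq_add_neg]
  have hdetE : E.det = 1 := by
    have htri : E.BlockTriangular id := by
      intro i j hij
      have h1 : i ≠ j := fun hh => by subst hh; exact lt_irrefl _ hij
      have h2 : i ≠ 0 := by
        intro hh; subst hh
        simp at hij
      simp [hE, h1, h2]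
    rw [Matrix.det_of_upperTriangular htri]
    apply Finset.prod_eq_one
    intro i _
    by_cases hi : i = 0 <;> simp [hE, hi]
  -- step 3 : expansion along first row
  have h3 : M₃.det = (M₃.submatrix Fin.succ Fin.succ).det := by
    rw [Matrix.det_succ_row_zero]
    rw [Finset.sum_eq_single 0]
    · simp [Fin.succAbove_zero, hM3]
    · intro j _ hj
      have hz : M₃ 0 j = 0 := by simp [hM3, hj, sub_zero]
      simp [hz]
    · intro h; exact absurd (Finset.mem_univ _) h
  -- step 4 : block decomposition
  have h4 : (M₃.submatrix Fin.succ Fin.succ).submatrix (esplit m) (esplit m)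
      = Matrix.fromBlocks (Ma b) (Mb b) (Mb b) (Ma b) := by
    ext i j
    rcases i with k|k <;> rcases j with l|l <;>
      simp only [Matrix.submatrix_apply, Matrix.fromBlocks_apply₁₁, Matrix.fromBlocks_apply₁₂,
        Matrix.fromBlocks_apply₂₁, Matrix.fromBlocks_apply₂₂, hM3, Matrix.of_apply,
        esplit_inl, esplit_inr, Ma, Mb]
    · rw [if_neg (gg_ne_zero l)]
    · rw [if_neg (fun hh : -(gg l) = 0 => gg_ne_zero l (neg_eq_zero.mp hh))]
      have e1 : -gg l - gg k = -(gg l + gg k) := by abel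
      rw [e1, hb (gg l + gg k), hb (gg l)]
    · rw [if_neg (gg_ne_zero l), sub_neg_eq_add]
    · rw [if_neg (fun hh : -(gg l) = 0 => gg_ne_zero l (neg_eq_zero.mp hh))]
      have e1 : -gg l - -gg k = -(gg l - gg k) := by abel
      rw [e1, hb (gg l - gg k), hb (gg l)]
  -- step 5 : determinant of blocks
  have h5 : (M₃.submatrix Fin.succ Fin.succ).det = (Ma b + Mb b).det * (Ma b - Mb b).det := by
    rw [← Matrix.det_submatrix_equiv_self (esplit m) (M₃.submatrix Fin.succ Fin.succ), h4,
      detblock]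
  -- step 6 : the two factors are equal
  have h6 : (Ma b + Mb b).det = (Ma b - Mb b).det := by
    have hD : ((Ma b + Mb b).submatrix Fin.rev Fin.rev).det = (Ma b + Mb b).det := by
      have h := Matrix.det_submatrix_equiv_self (Fin.revPerm) (Ma (R := R) b + Mb b)
      rw [show ((Ma (R := R) b + Mb b).submatrix Fin.rev Fin.rev)
        = ((Ma b + Mb b).submatrix ⇑Fin.revPerm ⇑Fin.revPerm) from rfl]
      exact h
    have h7 := congrArg Matrix.det (inter b hb)
    rw [Matrix.det_mul, Matrix.det_mul, detGmat, one_mul, mul_one, hD] at h7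
    exact h7
  calc M.det = (∑ i, b i) * M₂.det := h1
    _ = (∑ i, b i) * (M₂.det * E.det) := by rw [hdetE, mul_one]
    _ = (∑ i, b i) * M₃.det := by rw [← Matrix.det_mul, hME]
    _ = (∑ i, b i) * ((Ma b + Mb b).det * (Ma b - Mb b).det) := by rw [h3, h5]
    _ = (∑ i, b i) * (Ma b - Mb b).det ^ 2 := by rw [h6]; ring
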